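/- With the extremal setup below, assume further that v₁v_n is the unique negative edge of Γ′ and that x_n ≤ x₁. Then, for all sufficiently large n: every neighbor of v_n other than v₁ is also a neighbor of v₁, and every vertex of Γ′ other than v₁ and v_n is adjacent to v₁ or to v_n. -/

import Mathlib

open Matrix

/-- A signed graph of order `n`: a real symmetric `n × n` matrix with zero diagonal
whose off-diagonal entries lie in `{-1, 0, 1}`. -/
def IsSignedGraph {n : ℕ} (A : Matrix (Fin n) (Fin n) ℝ) : Prop :=
  A.IsSymm ∧ (∀ i, A i i = 0) ∧ ∀ i j, A i j = -1 ∨ A i j = 0 ∨ A i j = 1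

/-- The index (largest eigenvalue) of a signed graph. -/
noncomputable def lambdaMax {n : ℕ} (A : Matrix (Fin n) (Fin n) ℝ) : ℝ :=
  sSup (spectrum ℝ A)

/-- The smallest eigenvalue of a signed graph. -/
noncomputable def lambdaMin {n : ℕ} (A : Matrix (Fin n) (Fin n) ℝ) : ℝ :=
  sInf (spectrum ℝ A)

/-- The spectral radius of a signed graph. -/
noncomputable def rho {n : ℕ} (A : Matrix (Fin n) (Fin n) ℝ) : ℝ :=
  max (lambdaMax A) (-(lambdaMin A))

/-- There is a cycle, all of whose vertices lie in `s`, along whose edges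
the product of the entries of `A` is negative. -/
def HasNegCycleOn {n : ℕ} (A : Matrix (Fin n) (Fin n) ℝ) (s : Set (Fin n)) : Prop :=
  ∃ m : ℕ, 3 ≤ m ∧ ∃ c : ℕ → Fin n,
    (∀ i < m, ∀ j < m, c i = c j → i = j) ∧ (∀ i < m, c i ∈ s) ∧
    (∀ i < m, A (c i) (c ((i + 1) % m)) ≠ 0) ∧
    (∏ i ∈ Finset.range m, A (c i) (c ((i + 1) % m))) < 0

/-- A signed graph is unbalanced if it has a negative cycle. -/
def IsUnbalanced {n : ℕ} (A : Matrix (Fin n) (Fin n) ℝ) : Prop :=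
  HasNegCycleOn A Set.univ

/-- An `m`-element set of pairwise adjacent vertices whose induced signed complete
subgraph is unbalanced. -/
def IsKmMinus {n : ℕ} (A : Matrix (Fin n) (Fin n) ℝ) (m : ℕ) (s : Finset (Fin n)) : Prop :=
  s.card = m ∧ (∀ i ∈ s, ∀ j ∈ s, i ≠ j → A i j ≠ 0) ∧ HasNegCycleOn A ↑s

/-- A `K₄⁻` of a signed graph. -/
def IsK4Minus {n : ℕ} (A : Matrix (Fin n) (Fin n) ℝ) (s : Finset (Fin n)) : Prop :=
  IsKmMinus A 4 s

/-- A signed graph is `t𝒦₄⁻`-free if it contains fewer than `t` distinct `K₄⁻`'s. -/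
def TK4Free {n : ℕ} (t : ℕ) (A : Matrix (Fin n) (Fin n) ℝ) : Prop :=
  {s : Finset (Fin n) | IsK4Minus A s}.ncard < t

/-- Switching isomorphism of signed graphs: `B = (PD) A (PD)ᵀ` for a permutation
matrix `P` and a `±1` diagonal matrix `D`. -/
def SwitchIso {n : ℕ} (A B : Matrix (Fin n) (Fin n) ℝ) : Prop :=
  ∃ (σ : Equiv.Perm (Fin n)) (d : Fin n → ℝ), (∀ i, d i = 1 ∨ d i = -1) ∧
    B = (σ.permMatrix ℝ * Matrix.diagonal d) * A * (σ.permMatrix ℝ * Matrix.diagonal d)ᵀ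

/-- The signed graph `Γ_{s,n}`: the vertices `0, …, n-2` are pairwise adjacent,
the last vertex `n-1` is adjacent exactly to `0, …, s`, and every edge is positive
except the single negative edge joining `n-1` and `0`. -/
noncomputable def GammaSN (s n : ℕ) : Matrix (Fin n) (Fin n) ℝ :=
  fun i j =>
    if i = j then 0
    else if i.val ≠ n - 1 ∧ j.val ≠ n - 1 then 1
    else if min i.val j.val = 0 then -1
    else if min i.val j.val ≤ s then 1
    else 0

/-- The signed graph `Σ_{k,n}` with parameter `r`: vertex `0` is `u₁`, vertex `1` is `u₂`,
vertices `2, …, r+1` are `w₁, …, w_r`, vertices `r+2, …, r+k+1` are `q₁, …, q_k`, and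
vertices `r+k+2, …, n-1` are `v₁, …, v_{n-2-r-k}`.  The only negative edge is `u₁u₂`. -/
noncomputable def SigmaKN (r k n : ℕ) : Matrix (Fin n) (Fin n) ℝ :=
  fun i j =>
    if i = j then 0
    else if min i.val j.val = 0 then (if max i.val j.val = 1 then -1 else 1)
    else if min i.val j.val = 1 then (if max i.val j.val ≤ r + k + 1 then 1 else 0)
    else if max i.val j.val ≤ r + 1 then 1
    else if max i.val j.val ≤ r + k + 1 then 0
    else 1
section comb
variable {n : ℕ}

/-- the elementary symmetric 0/1 matrix with ones exactly at (p,q),(q,p). -/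
def Ema (p q : Fin n) : Matrix (Fin n) (Fin n) ℝ :=
  fun a b => if (a = p ∧ b = q) ∨ (a = q ∧ b = p) then 1 else 0

lemma Ema_apply (p q a b : Fin n) :
    Ema p q a b = if (a = p ∧ b = q) ∨ (a = q ∧ b = p) then 1 else 0 := rfl

lemma Ema_isSymm (p q : Fin n) : (Ema p q).IsSymm := by
  unfold Matrix.IsSymm
  funext a b
  simp only [Matrix.transpose_apply, Ema]
  by_cases h1 : (b = p ∧ a = q) ∨ (b = q ∧ a = p)
  · rw [if_pos h1, if_pos (by tauto)]
  · rw [if_neg h1, if_neg (by tauto)]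

lemma Ema_mulVec {p q : Fin n} (hpq : p ≠ q) (y : Fin n → ℝ) :
    Ema p q *ᵥ y = fun a => if a = p then y q else if a = q then y p else 0 := by
  funext a
  simp only [Matrix.mulVec, dotProduct, Ema]
  by_cases hap : a = p
  · rw [if_pos hap]
    have key : ∀ b : Fin n, (if (a = p ∧ b = q) ∨ (a = q ∧ b = p) then (1:ℝ) else 0) * y b
        = if b = q then y b else 0 := by
      intro b
      by_cases hb : b = q
      · rw [if_pos (Or.inl ⟨hap, hb⟩), one_mul, if_pos hb]
      · rw [if_neg ?_, zero_mul, if_neg hb]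
        rintro (⟨_, h2⟩ | ⟨h1, _⟩)
        · exact hb h2
        · exact hpq (hap.symm.trans h1)
    rw [Finset.sum_congr rfl fun b _ => key b, Finset.sum_ite_eq' Finset.univ q y,
      if_pos (Finset.mem_univ q)]
  · rw [if_neg hap]
    by_cases haq : a = q
    · rw [if_pos haq]
      have key : ∀ b : Fin n, (if (a = p ∧ b = q) ∨ (a = q ∧ b = p) then (1:ℝ) else 0) * y b
          = if b = p then y b else 0 := by
        intro b
        by_cases hb : b = p
        · rw [if_pos (Or.inr ⟨haq, hb⟩), one_mul, if_pos hb]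
        · rw [if_neg ?_, zero_mul, if_neg hb]
          rintro (⟨h1, _⟩ | ⟨_, h2⟩)
          · exact hap h1
          · exact hb h2
      rw [Finset.sum_congr rfl fun b _ => key b, Finset.sum_ite_eq' Finset.univ p y,
        if_pos (Finset.mem_univ p)]
    · rw [if_neg haq]
      refine Finset.sum_eq_zero fun b _ => ?_
      rw [if_neg ?_, zero_mul]
      rintro (⟨h1, _⟩ | ⟨h1, _⟩)
      · exact hap h1
      · exact haq h1

lemma quad_Ema {p q : Fin n} (hpq : p ≠ q) (x : Fin n → ℝ) :
    x ⬝ᵥ Ema p q *ᵥ x = 2 * (x p * x q) := by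
  rw [Ema_mulVec hpq]
  simp only [dotProduct]
  have : ∀ a, x a * (if a = p then x q else if a = q then x p else 0)
      = (if a = p then x p * x q else 0) + (if a = q then x q * x p else 0) := by
    intro a
    by_cases hap : a = p
    · subst hap; simp [hpq]
    · by_cases haq : a = q
      · subst haq; simp [hap]
      · simp [hap, haq]
  rw [Finset.sum_congr rfl fun a _ => this a, Finset.sum_add_distrib]
  simp only [Finset.sum_ite_eq', Finset.mem_univ, if_true]
  ring

lemma cycle_transfer {A B : Matrix (Fin n) (Fin n) ℝ} {s : Set (Fin n)}
    (h : ∀ a b, a ∈ s → b ∈ s → A a b = B a b) (hc : HasNegCycleOn B s) :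
    HasNegCycleOn A s := by
  obtain ⟨m, hm, c, hinj, hmem, hnz, hprod⟩ := hc
  have hkey : ∀ i < m, A (c i) (c ((i + 1) % m)) = B (c i) (c ((i + 1) % m)) := by
    intro i hi
    exact h _ _ (hmem i hi) (hmem _ (Nat.mod_lt _ (by omega)))
  refine ⟨m, hm, c, hinj, hmem, fun i hi => ?_, ?_⟩
  · rw [hkey i hi]; exact hnz i hi
  · rw [Finset.prod_congr rfl fun i hi => hkey i (Finset.mem_range.mp hi)]
    exact hprod

lemma cycle_preserve {A B : Matrix (Fin n) (Fin n) ℝ} {s : Set (Fin n)}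
    (h : ∀ a b, A a b ≠ 0 → B a b = A a b) (hc : HasNegCycleOn A s) :
    HasNegCycleOn B s := by
  obtain ⟨m, hm, c, hinj, hmem, hnz, hprod⟩ := hc
  have hkey : ∀ i < m, B (c i) (c ((i + 1) % m)) = A (c i) (c ((i + 1) % m)) :=
    fun i hi => h _ _ (hnz i hi)
  refine ⟨m, hm, c, hinj, hmem, fun i hi => ?_, ?_⟩
  · rw [hkey i hi]; exact hnz i hi
  · rw [Finset.prod_congr rfl fun i hi => hkey i (Finset.mem_range.mp hi)]
    exact hprod

lemma neg_entry_of_cycle {B : Matrix (Fin n) (Fin n) ℝ} {s : Set (Fin n)}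
    (hc : HasNegCycleOn B s) : ∃ a b, a ∈ s ∧ b ∈ s ∧ B a b < 0 := by
  obtain ⟨m, hm, c, hinj, hmem, hnz, hprod⟩ := hc
  by_contra h
  push_neg at h
  refine absurd hprod (not_lt.mpr (Finset.prod_nonneg fun i hi => ?_))
  have hi' := Finset.mem_range.mp hi
  have h1 := hmem i hi'
  have h2 := hmem _ (Nat.mod_lt (i+1) (show 0 < m by omega))
  exact h _ _ h1 h2

lemma triangle_unbalanced {B : Matrix (Fin n) (Fin n) ℝ} {a b c : Fin n}
    (hab : a ≠ b) (hbc : b ≠ c) (hca : c ≠ a)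
    (hprod : B a b * B b c * B c a < 0) : IsUnbalanced B := by
  have hab0 : B a b ≠ 0 := fun h => by rw [h] at hprod; simp at hprod
  have hbc0 : B b c ≠ 0 := fun h => by rw [h] at hprod; simp at hprod
  have hca0 : B c a ≠ 0 := fun h => by rw [h] at hprod; simp at hprod
  refine ⟨3, le_refl 3, fun i => if i = 0 then a else if i = 1 then b else c, ?_, ?_, ?_, ?_⟩
  · intro i hi j hj hij
    interval_cases i <;> interval_cases j <;> simp_all
  · intro i _; exact Set.mem_univ _
  · intro i hi
    interval_cases i <;> norm_num <;> assumption
  · rw [Finset.prod_range_succ, Finset.prod_range_succ, Finset.prod_range_one]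
    norm_num
    exact hprod

lemma tk4free_of_subset {A B : Matrix (Fin n) (Fin n) ℝ} {t : ℕ}
    (h : ∀ s : Finset (Fin n), IsK4Minus B s → IsK4Minus A s) (hA : TK4Free t A) :
    TK4Free t B := by
  refine lt_of_le_of_lt (Set.ncard_le_ncard ?_ (Set.toFinite _)) hA
  intro s hs
  exact h s hs

lemma k4_transfer {A B : Matrix (Fin n) (Fin n) ℝ} {s : Finset (Fin n)}
    (h : ∀ a b, a ∈ s → b ∈ s → A a b = B a b) (hK : IsK4Minus B s) : IsK4Minus A s := by
  obtain ⟨hcard, hadj, hcyc⟩ := hK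
  refine ⟨hcard, fun i hi j hj hij => ?_, ?_⟩
  · rw [h i j hi hj]; exact hadj i hi j hj hij
  · exact cycle_transfer (fun a b ha hb => h a b ha hb) hcyc

end comb

-- spectral helpers

variable {n : ℕ}

lemma isHermitian_of_isSymm {A : Matrix (Fin n) (Fin n) ℝ} (h : A.IsSymm) : A.IsHermitian := by
  rwa [IsHermitian, conjTranspose_eq_transpose_of_trivial]

section spec
variable {A : Matrix (Fin n) (Fin n) ℝ} (hA : A.IsHermitian)

lemma quad_transform (y : Fin n → ℝ) :
    y ⬝ᵥ A *ᵥ y = ∑ i, hA.eigenvalues i * ((star (hA.eigenvectorUnitary : Matrix (Fin n) (Fin n) ℝ) *ᵥ y) i)^2 := by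
  set U : Matrix (Fin n) (Fin n) ℝ := (hA.eigenvectorUnitary : Matrix (Fin n) (Fin n) ℝ) with hU
  set z := star U *ᵥ y with hz
  have hvm : vecMul y U = z := by
    rw [hz, Matrix.star_eq_conjTranspose, conjTranspose_eq_transpose_of_trivial,
      Matrix.mulVec_transpose]
  conv_lhs => rw [hA.spectral_theorem]
  rw [RCLike.ofReal_real_eq_id, Unitary.conjStarAlgAut_apply]
  rw [← Matrix.mulVec_mulVec, ← Matrix.mulVec_mulVec, Matrix.dotProduct_mulVec, hvm, ← hU, ← hz]
  unfold dotProduct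
  refine Finset.sum_congr rfl fun i _ => ?_
  rw [Matrix.mulVec_diagonal]
  simp only [Function.comp_apply, id_eq]
  ring

lemma norm_transform (y : Fin n → ℝ) :
    ∑ i, ((star (hA.eigenvectorUnitary : Matrix (Fin n) (Fin n) ℝ) *ᵥ y) i)^2 = ∑ i, y i ^ 2 := by
  set U : Matrix (Fin n) (Fin n) ℝ := (hA.eigenvectorUnitary : Matrix (Fin n) (Fin n) ℝ) with hU
  set z := star U *ᵥ y with hz
  have hvm : vecMul y U = z := by
    rw [hz, Matrix.star_eq_conjTranspose, conjTranspose_eq_transpose_of_trivial,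
      Matrix.mulVec_transpose]
  have h1 : (U * star U) *ᵥ y = y := by
    rw [Matrix.mem_unitaryGroup_iff.mp hA.eigenvectorUnitary.2, Matrix.one_mulVec]
  have hsU : star U = Uᵀ := by
    rw [Matrix.star_eq_conjTranspose, conjTranspose_eq_transpose_of_trivial]
  have : z ⬝ᵥ z = y ⬝ᵥ y := by
    conv_lhs => rw [hz]
    rw [dotProduct_comm, Matrix.dotProduct_mulVec]
    have : z ᵥ* star U = y := by
      rw [hsU, ← Matrix.mulVec_transpose, Matrix.transpose_transpose, hz, hsU,
        Matrix.mulVec_mulVec]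
      have : U * Uᵀ = (1 : Matrix (Fin n) (Fin n) ℝ) := by
        rw [← hsU]; exact Matrix.mem_unitaryGroup_iff.mp hA.eigenvectorUnitary.2
      rw [this, Matrix.one_mulVec]
    rw [this]
  have h2 : ∀ w : Fin n → ℝ, w ⬝ᵥ w = ∑ i, w i ^ 2 := by
    intro w; unfold dotProduct; exact Finset.sum_congr rfl fun i _ => (sq (w i)).symm
  rw [← h2, ← h2, this]

lemma mulVec_from_z (y : Fin n → ℝ) :
    A *ᵥ y = (hA.eigenvectorUnitary : Matrix (Fin n) (Fin n) ℝ) *ᵥ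
      (fun i => hA.eigenvalues i * (star (hA.eigenvectorUnitary : Matrix (Fin n) (Fin n) ℝ) *ᵥ y) i) := by
  conv_lhs => rw [hA.spectral_theorem]
  rw [RCLike.ofReal_real_eq_id, Unitary.conjStarAlgAut_apply, ← Matrix.mulVec_mulVec, ← Matrix.mulVec_mulVec]
  have hd : diagonal (id ∘ hA.eigenvalues) *ᵥ (star (hA.eigenvectorUnitary : Matrix (Fin n) (Fin n) ℝ) *ᵥ y)
      = fun i => hA.eigenvalues i * (star (hA.eigenvectorUnitary : Matrix (Fin n) (Fin n) ℝ) *ᵥ y) i := by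
    funext i
    rw [Matrix.mulVec_diagonal]
    simp
  rw [hd]

end spec

section ray
variable {A : Matrix (Fin n) (Fin n) ℝ} (hA : A.IsHermitian)

lemma univ_ne (hn : 0 < n) : (Finset.univ : Finset (Fin n)).Nonempty := ⟨⟨0, hn⟩, Finset.mem_univ _⟩

noncomputable def dsup (hn : 0 < n) : ℝ := (Finset.univ : Finset (Fin n)).sup' (univ_ne hn) hA.eigenvalues

lemma rayleigh_le_dsup (hn : 0 < n) (y : Fin n → ℝ) :
    y ⬝ᵥ A *ᵥ y ≤ dsup hA hn * ∑ i, y i ^ 2 := by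
  rw [quad_transform hA y, ← norm_transform hA y, Finset.mul_sum]
  refine Finset.sum_le_sum fun i _ => ?_
  have h1 : hA.eigenvalues i ≤ dsup hA hn := Finset.le_sup' _ (Finset.mem_univ i)
  have h2 : (0:ℝ) ≤ _ ^ 2 := sq_nonneg ((star (hA.eigenvectorUnitary : Matrix (Fin n) (Fin n) ℝ) *ᵥ y) i)
  exact mul_le_mul_of_nonneg_right h1 h2

lemma sum_sq_pos_of_ne_zero {v : Fin n → ℝ} (hv : v ≠ 0) : 0 < ∑ i, v i ^ 2 := by
  have : ∃ i, v i ≠ 0 := by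
    by_contra h
    push_neg at h
    exact hv (funext h)
  obtain ⟨i, hi⟩ := this
  have h1 : v i ^ 2 ≤ ∑ j, v j ^ 2 :=
    Finset.single_le_sum (fun j _ => sq_nonneg (v j)) (Finset.mem_univ i)
  exact lt_of_lt_of_le (by positivity) h1

lemma spectrum_le_dsup (hn : 0 < n) {μ : ℝ} (hμ : μ ∈ spectrum ℝ A) : μ ≤ dsup hA hn := by
  rw [spectrum.mem_iff] at hμ
  have hdet : (algebraMap ℝ (Matrix (Fin n) (Fin n) ℝ) μ - A).det = 0 := by
    by_contra h
    exact hμ ((Matrix.isUnit_iff_isUnit_det _).mpr (isUnit_iff_ne_zero.mpr h))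
  obtain ⟨v, hv0, hv⟩ := (Matrix.exists_mulVec_eq_zero_iff).mpr hdet
  have hev : A *ᵥ v = μ • v := by
    have := hv
    rw [Algebra.algebraMap_eq_smul_one, Matrix.sub_mulVec, Matrix.smul_mulVec,
      Matrix.one_mulVec, sub_eq_zero] at this
    exact this.symm
  have hq : v ⬝ᵥ A *ᵥ v = μ * ∑ i, v i ^ 2 := by
    rw [hev, dotProduct_smul]
    have : v ⬝ᵥ v = ∑ i, v i ^ 2 := by
      unfold dotProduct; exact Finset.sum_congr rfl fun i _ => (sq (v i)).symm
    rw [smul_eq_mul, this]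
  have hle := rayleigh_le_dsup hA hn v
  rw [hq] at hle
  have hS := sum_sq_pos_of_ne_zero (n := n) hv0
  exact le_of_mul_le_mul_right hle hS

lemma lambdaMax_eq_dsup (hn : 0 < n) : lambdaMax A = dsup hA hn := by
  obtain ⟨i, _, hi⟩ := Finset.exists_mem_eq_sup' (univ_ne hn) hA.eigenvalues
  refine le_antisymm ?_ ?_
  · refine csSup_le ⟨hA.eigenvalues i, hA.eigenvalues_mem_spectrum_real i⟩
      fun μ hμ => spectrum_le_dsup hA hn hμ
  · rw [dsup, hi]
    refine le_csSup ⟨dsup hA hn, fun μ hμ => spectrum_le_dsup hA hn hμ⟩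
      (hA.eigenvalues_mem_spectrum_real i)

lemma rayleigh_le_lambdaMax (hA : A.IsHermitian) (hn : 0 < n) (y : Fin n → ℝ) :
    y ⬝ᵥ A *ᵥ y ≤ lambdaMax A * ∑ i, y i ^ 2 := by
  rw [lambdaMax_eq_dsup hA hn]; exact rayleigh_le_dsup hA hn y

lemma eigen_of_rayleigh_eq (hA : A.IsHermitian) (hn : 0 < n) {x : Fin n → ℝ} (hx : ∑ i, x i ^ 2 = 1)
    (heq : x ⬝ᵥ A *ᵥ x = lambdaMax A) : A *ᵥ x = lambdaMax A • x := by
  set M := lambdaMax A with hM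
  set U : Matrix (Fin n) (Fin n) ℝ := (hA.eigenvectorUnitary : Matrix (Fin n) (Fin n) ℝ) with hU
  set z := star U *ᵥ x with hz
  have hMd : M = dsup hA hn := lambdaMax_eq_dsup hA hn
  have hsum : ∑ i, (M - hA.eigenvalues i) * z i ^ 2 = 0 := by
    have h1 : ∑ i, hA.eigenvalues i * z i ^ 2 = M := by
      rw [← quad_transform hA x, heq]
    have h2 : ∑ i, z i ^ 2 = 1 := by rw [norm_transform hA x, hx]
    calc ∑ i, (M - hA.eigenvalues i) * z i ^ 2
        = M * ∑ i, z i ^ 2 - ∑ i, hA.eigenvalues i * z i ^ 2 := by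
          rw [Finset.mul_sum, ← Finset.sum_sub_distrib]
          exact Finset.sum_congr rfl fun i _ => by ring
      _ = 0 := by rw [h1, h2]; ring
  have hterm : ∀ i ∈ Finset.univ, (M - hA.eigenvalues i) * z i ^ 2 = 0 := by
    rw [← Finset.sum_eq_zero_iff_of_nonneg]
    · exact hsum
    · intro i _
      have : hA.eigenvalues i ≤ M := hMd ▸ Finset.le_sup' _ (Finset.mem_univ i)
      have := sub_nonneg.mpr this
      positivity
  have hdz : ∀ i, hA.eigenvalues i * z i = M * z i := by
    intro i
    rcases mul_eq_zero.mp (hterm i (Finset.mem_univ i)) with h | h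
    · rw [sub_eq_zero] at h; rw [← h]
    · rw [pow_eq_zero_iff (by norm_num)] at h
      rw [h, mul_zero, mul_zero]
  have hUz : U *ᵥ z = x := by
    rw [hz, Matrix.mulVec_mulVec, Matrix.mem_unitaryGroup_iff.mp hA.eigenvectorUnitary.2,
      Matrix.one_mulVec]
  rw [mulVec_from_z hA x, ← hU, ← hz]
  have : (fun i => hA.eigenvalues i * z i) = M • z := by
    funext i; rw [hdz i]; rfl
  rw [this, Matrix.mulVec_smul, hUz]

end ray

section exchange
variable {n : ℕ} {A : Matrix (Fin n) (Fin n) ℝ} {x : Fin n → ℝ}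

lemma dot_self_eq_sum_sq (y : Fin n → ℝ) : y ⬝ᵥ y = ∑ i, y i ^ 2 := by
  unfold dotProduct
  exact Finset.sum_congr rfl fun i _ => (sq (y i)).symm

lemma quad_A_eq (hx1 : ∑ i, x i ^ 2 = 1) (heig : A *ᵥ x = lambdaMax A • x) :
    x ⬝ᵥ A *ᵥ x = lambdaMax A := by
  rw [heig, dotProduct_smul, smul_eq_mul, dot_self_eq_sum_sq, hx1, mul_one]

lemma conclude (hn : 0 < n) {B : Matrix (Fin n) (Fin n) ℝ} (hB : B.IsSymm)
    (hx1 : ∑ i, x i ^ 2 = 1) (hmaxB : lambdaMax B ≤ lambdaMax A) {δ : ℝ} (hδ : 0 ≤ δ)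
    (hquad : x ⬝ᵥ B *ᵥ x = lambdaMax A + δ) :
    B *ᵥ x = lambdaMax A • x := by
  have hray := rayleigh_le_lambdaMax (isHermitian_of_isSymm hB) hn x
  rw [hquad, hx1, mul_one] at hray
  have hδ0 : δ = 0 := le_antisymm (by linarith) hδ
  have hBeq : lambdaMax B = lambdaMax A := le_antisymm hmaxB (by linarith)
  have h := eigen_of_rayleigh_eq (isHermitian_of_isSymm hB) hn hx1
    (by rw [hquad, hδ0, add_zero, hBeq])
  rw [hBeq] at h
  exact h

lemma add_exchange (hn : 0 < n) (hsym : A.IsSymm) (hx1 : ∑ i, x i ^ 2 = 1)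
    (hxnn : ∀ i, 0 ≤ x i)
    (heig : A *ᵥ x = lambdaMax A • x) {p q : Fin n} (hpq : p ≠ q) (hApq : A p q = 0)
    (hmaxB : lambdaMax (A + Ema p q) ≤ lambdaMax A) : x p = 0 ∧ x q = 0 := by
  have hBsym : (A + Ema p q).IsSymm := by
    unfold Matrix.IsSymm
    rw [Matrix.transpose_add, hsym, Ema_isSymm p q]
  have hquad : x ⬝ᵥ (A + Ema p q) *ᵥ x = lambdaMax A + 2 * (x p * x q) := by
    rw [Matrix.add_mulVec, dotProduct_add, quad_A_eq hx1 heig, quad_Ema hpq]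
  have hδ : 0 ≤ 2 * (x p * x q) := by
    have := hxnn p; have := hxnn q; positivity
  have hem := conclude hn hBsym hx1 hmaxB hδ hquad
  have hE : Ema p q *ᵥ x = 0 := by
    rw [Matrix.add_mulVec, heig] at hem
    calc Ema p q *ᵥ x = lambdaMax A • x + Ema p q *ᵥ x - lambdaMax A • x := by ring_nf
      _ = lambdaMax A • x - lambdaMax A • x := by rw [hem]
      _ = 0 := sub_self _
  constructor
  · have h := congrFun hE q
    rw [Ema_mulVec hpq] at h
    simpa [hpq.symm] using h
  · have h := congrFun hE p
    rw [Ema_mulVec hpq] at h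
    simpa using h

lemma swap_exchange (hn : 0 < n) (hsym : A.IsSymm) (hx1 : ∑ i, x i ^ 2 = 1)
    (hxnn : ∀ i, 0 ≤ x i)
    (heig : A *ᵥ x = lambdaMax A • x) {p q r : Fin n} (hpq : p ≠ q) (hrq : r ≠ q)
    (hpr : p ≠ r) (hApq : A p q = 0) (hxle : x r ≤ x p)
    (hmaxB : lambdaMax (A + Ema p q - Ema r q) ≤ lambdaMax A) : x q = 0 ∧ x p = x r := by
  have hBsym : (A + Ema p q - Ema r q).IsSymm := by
    unfold Matrix.IsSymm
    rw [Matrix.transpose_sub, Matrix.transpose_add, hsym, Ema_isSymm p q, Ema_isSymm r q]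
  have hquad : x ⬝ᵥ (A + Ema p q - Ema r q) *ᵥ x
      = lambdaMax A + 2 * (x q * (x p - x r)) := by
    rw [Matrix.sub_mulVec, Matrix.add_mulVec, dotProduct_sub, dotProduct_add,
      quad_A_eq hx1 heig, quad_Ema hpq, quad_Ema hrq]
    ring
  have hδ : 0 ≤ 2 * (x q * (x p - x r)) := by
    have h1 := hxnn q
    have h2 := sub_nonneg.mpr hxle
    positivity
  have hem := conclude hn hBsym hx1 hmaxB hδ hquad
  have hE : Ema p q *ᵥ x - Ema r q *ᵥ x = 0 := by
    rw [Matrix.sub_mulVec, Matrix.add_mulVec, heig] at hem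
    calc Ema p q *ᵥ x - Ema r q *ᵥ x
        = lambdaMax A • x + (Ema p q *ᵥ x - Ema r q *ᵥ x) - lambdaMax A • x := by ring_nf
      _ = lambdaMax A • x - lambdaMax A • x := by rw [← add_sub_assoc, hem]
      _ = 0 := sub_self _
  constructor
  · have h := congrFun hE r
    rw [Ema_mulVec hpq, Ema_mulVec hrq] at h
    simpa [hpr.symm, hrq] using h
  · have h := congrFun hE q
    rw [Ema_mulVec hpq, Ema_mulVec hrq] at h
    simp [hpq.symm, hrq.symm] at h
    linarith [h]

end exchange

section admiss
variable {n t : ℕ} {A : Matrix (Fin n) (Fin n) ℝ}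

lemma signed_add (hsg : IsSignedGraph A) {p q : Fin n} (hpq : p ≠ q) (hApq : A p q = 0) :
    IsSignedGraph (A + Ema p q) := by
  obtain ⟨hsym, hdiag, hval⟩ := hsg
  have hAqp : A q p = 0 := by rw [← hsym.apply q p]; exact hApq
  refine ⟨?_, ?_, ?_⟩
  · unfold Matrix.IsSymm
    rw [Matrix.transpose_add, hsym, Ema_isSymm p q]
  · intro a
    simp only [Matrix.add_apply, Ema_apply]
    rw [if_neg, hdiag, add_zero]
    rintro (⟨e1, e2⟩ | ⟨e1, e2⟩)
    · exact hpq (e1.symm.trans e2)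
    · exact hpq (e2.symm.trans e1)
  · intro a b
    simp only [Matrix.add_apply, Ema_apply]
    by_cases h : (a = p ∧ b = q) ∨ (a = q ∧ b = p)
    · rw [if_pos h]
      rcases h with ⟨e1, e2⟩ | ⟨e1, e2⟩ <;> subst e1 <;> subst e2
      · rw [hApq, zero_add]; right; right; rfl
      · rw [hAqp, zero_add]; right; right; rfl
    · rw [if_neg h, add_zero]; exact hval a b

lemma unb_add (hunb : IsUnbalanced A) {p q : Fin n} (hApq : A p q = 0) (hAqp : A q p = 0) :
    IsUnbalanced (A + Ema p q) := by
  refine cycle_preserve (fun a b hab => ?_) hunb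
  simp only [Matrix.add_apply, Ema_apply]
  rw [if_neg, add_zero]
  rintro (⟨e1, e2⟩ | ⟨e1, e2⟩) <;> subst e1 <;> subst e2
  · exact hab hApq
  · exact hab hAqp

lemma add_apply_eq (hsym : A.IsSymm) {p q : Fin n} (hApq : A p q = 0) (a b : Fin n) :
    (A + Ema p q) a b = if (a = p ∧ b = q) ∨ (a = q ∧ b = p) then 1 else A a b := by
  have hAqp : A q p = 0 := by rw [← hsym.apply q p]; exact hApq
  simp only [Matrix.add_apply, Ema_apply]
  by_cases h : (a = p ∧ b = q) ∨ (a = q ∧ b = p)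
  · rw [if_pos h, if_pos h]
    rcases h with ⟨e1, e2⟩ | ⟨e1, e2⟩ <;> subst e1 <;> subst e2
    · rw [hApq, zero_add]
    · rw [hAqp, zero_add]
  · rw [if_neg h, if_neg h, add_zero]

lemma free_add (hsg : IsSignedGraph A) (hfree : TK4Free t A) {v1 vn q : Fin n}
    (hv1n : v1 ≠ vn)
    (hsigns : ∀ i j, A i j < 0 → (i = v1 ∧ j = vn) ∨ (i = vn ∧ j = v1))
    (hq1 : q ≠ v1) (hqn : q ≠ vn) (h1q : A v1 q = 0)
    (hside : A vn q = 0 ∨ (∀ w, w ≠ v1 → w ≠ vn → ¬(A v1 w ≠ 0 ∧ A vn w ≠ 0))) :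
    TK4Free t (A + Ema v1 q) := by
  obtain ⟨hsym, hdiag, hval⟩ := hsg
  have hBapp := add_apply_eq hsym h1q
  refine tk4free_of_subset (fun s hK => ?_) hfree
  have hmem : v1 ∈ s ∧ vn ∈ s := by
    obtain ⟨a, b, ha, hb, hneg'⟩ := neg_entry_of_cycle hK.2.2
    have hneg2 : A a b < 0 := by
      rw [hBapp a b] at hneg'
      split_ifs at hneg' with h
      · norm_num at hneg'
      · exact hneg'
    rcases hsigns a b hneg2 with ⟨e1, e2⟩ | ⟨e1, e2⟩ <;> subst e1 <;> subst e2
    · exact ⟨Finset.mem_coe.mp ha, Finset.mem_coe.mp hb⟩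
    · exact ⟨Finset.mem_coe.mp hb, Finset.mem_coe.mp ha⟩
  have hqs : q ∉ s := by
    intro hqs
    rcases hside with hnq | hnoc
    · have hadj := hK.2.1 vn hmem.2 q hqs (Ne.symm hqn)
      rw [hBapp vn q, if_neg] at hadj
      · exact hadj hnq
      · rintro (⟨e, _⟩ | ⟨e, _⟩)
        · exact hv1n e.symm
        · exact hqn e.symm
    · have hsub : ¬ s ⊆ {v1, vn, q} := by
        intro hsub
        have h3 : ({v1, vn, q} : Finset (Fin n)).card ≤ 3 :=
          (Finset.card_insert_le _ _).trans (by
            exact Nat.succ_le_succ ((Finset.card_insert_le _ _).trans (by simp)))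
        have := (Finset.card_le_card hsub).trans h3
        rw [hK.1] at this
        omega
      obtain ⟨w, hws, hwnot⟩ : ∃ w ∈ s, w ∉ ({v1, vn, q} : Finset (Fin n)) := by
        by_contra h
        push_neg at h
        exact hsub h
      simp only [Finset.mem_insert, Finset.mem_singleton, not_or] at hwnot
      obtain ⟨hwv1, hwvn, hwq⟩ := hwnot
      have had1 := hK.2.1 v1 hmem.1 w hws (Ne.symm hwv1)
      rw [hBapp v1 w, if_neg] at had1
      · have hadn := hK.2.1 vn hmem.2 w hws (Ne.symm hwvn)
        rw [hBapp vn w, if_neg] at hadn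
        · exact hnoc w hwv1 hwvn ⟨had1, hadn⟩
        · rintro (⟨e, _⟩ | ⟨e, _⟩)
          · exact hv1n e.symm
          · exact hqn e.symm
      · rintro (⟨_, e⟩ | ⟨e, _⟩)
        · exact hwq e
        · exact hq1 e.symm
  refine k4_transfer (fun a b ha hb => ?_) hK
  rw [hBapp a b, if_neg]
  rintro (⟨_, e2⟩ | ⟨e1, _⟩)
  · exact hqs (e2 ▸ hb)
  · exact hqs (e1 ▸ ha)

end admiss

section swapadm
variable {n t : ℕ} {A : Matrix (Fin n) (Fin n) ℝ}

lemma swap_apply_eq (hsg : IsSignedGraph A) {v1 vn j : Fin n}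
    (hv1n : v1 ≠ vn) (hj1 : j ≠ v1) (hjn : j ≠ vn)
    (hsigns : ∀ i j, A i j < 0 → (i = v1 ∧ j = vn) ∨ (i = vn ∧ j = v1))
    (h1j : A v1 j = 0) (hnj : A vn j ≠ 0) (a b : Fin n) :
    (A + Ema v1 j - Ema vn j) a b =
      if (a = v1 ∧ b = j) ∨ (a = j ∧ b = v1) then 1
      else if (a = vn ∧ b = j) ∨ (a = j ∧ b = vn) then 0
      else A a b := by
  obtain ⟨hsym, hdiag, hval⟩ := hsg
  have hj1' : A j v1 = 0 := by rw [← hsym.apply j v1]; exact h1j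
  have hnj1 : A vn j = 1 := by
    rcases hval vn j with h | h | h
    · exfalso
      rcases hsigns vn j (by rw [h]; norm_num) with ⟨e, _⟩ | ⟨_, e⟩
      · exact hv1n e.symm
      · exact hj1 e
    · exact absurd h hnj
    · exact h
  have hjn1 : A j vn = 1 := by rw [hsym.apply j vn] at hnj1; exact hnj1
  simp only [Matrix.sub_apply, Matrix.add_apply, Ema_apply]
  by_cases hc1 : (a = v1 ∧ b = j) ∨ (a = j ∧ b = v1)
  · rw [if_pos hc1, if_pos hc1]
    have hc2 : ¬((a = vn ∧ b = j) ∨ (a = j ∧ b = vn)) := by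
      rintro (⟨e1, e2⟩ | ⟨e1, e2⟩) <;> rcases hc1 with ⟨f1, f2⟩ | ⟨f1, f2⟩
      · exact hv1n (f1.symm.trans e1)
      · exact hj1 (e2.symm.trans f2)
      · exact hj1 (e1.symm.trans f1)
      · exact hv1n (f2.symm.trans e2)
    rw [if_neg hc2, sub_zero]
    rcases hc1 with ⟨e1, e2⟩ | ⟨e1, e2⟩ <;> subst e1 <;> subst e2
    · rw [h1j, zero_add]
    · rw [hj1', zero_add]
  · rw [if_neg hc1, if_neg hc1]
    by_cases hc2 : (a = vn ∧ b = j) ∨ (a = j ∧ b = vn)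
    · rw [if_pos hc2, if_pos hc2, add_zero]
      rcases hc2 with ⟨e1, e2⟩ | ⟨e1, e2⟩ <;> subst e1 <;> subst e2
      · rw [hnj1, sub_self]
      · rw [hjn1, sub_self]
    · rw [if_neg hc2, if_neg hc2, add_zero, sub_zero]

end swapadm


section swapadm2
variable {n t : ℕ} {A : Matrix (Fin n) (Fin n) ℝ} {v1 vn j w : Fin n}

lemma swap_entry_eq (hsg : IsSignedGraph A)
    (hv1n : v1 ≠ vn) (hj1 : j ≠ v1) (hjn : j ≠ vn)
    (hsigns : ∀ i j, A i j < 0 → (i = v1 ∧ j = vn) ∨ (i = vn ∧ j = v1))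
    (h1j : A v1 j = 0) (hnj : A vn j ≠ 0) {a b : Fin n} (ha : a ≠ j) (hb : b ≠ j) :
    (A + Ema v1 j - Ema vn j) a b = A a b := by
  rw [swap_apply_eq hsg hv1n hj1 hjn hsigns h1j hnj a b, if_neg, if_neg]
  · rintro (⟨_, e⟩ | ⟨e, _⟩)
    · exact hb e
    · exact ha e
  · rintro (⟨_, e⟩ | ⟨e, _⟩)
    · exact hb e
    · exact ha e

lemma swap_admissible (hsg : IsSignedGraph A) (hunb : IsUnbalanced A) (hfree : TK4Free t A)
    (hv1n : v1 ≠ vn) (hj1 : j ≠ v1) (hjn : j ≠ vn)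
    (hsigns : ∀ i j, A i j < 0 → (i = v1 ∧ j = vn) ∨ (i = vn ∧ j = v1))
    (hA1n : A v1 vn = -1)
    (h1j : A v1 j = 0) (hnj : A vn j ≠ 0)
    (hw1 : w ≠ v1) (hwn : w ≠ vn) (hw1a : A v1 w ≠ 0) (hwna : A vn w ≠ 0) :
    IsSignedGraph (A + Ema v1 j - Ema vn j) ∧ IsUnbalanced (A + Ema v1 j - Ema vn j) ∧
      TK4Free t (A + Ema v1 j - Ema vn j) := by
  have hBapp := swap_apply_eq hsg hv1n hj1 hjn hsigns h1j hnj
  have hBeq := fun {a b : Fin n} (ha : a ≠ j) (hb : b ≠ j) =>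
    swap_entry_eq hsg hv1n hj1 hjn hsigns h1j hnj ha hb
  obtain ⟨hsym, hdiag, hval⟩ := hsg
  have hwj : w ≠ j := fun e => hw1a (by rw [e]; exact h1j)
  have hBvnj : (A + Ema v1 j - Ema vn j) vn j = 0 := by
    rw [hBapp vn j, if_neg, if_pos (Or.inl ⟨rfl, rfl⟩)]
    rintro (⟨e, _⟩ | ⟨e, _⟩)
    · exact hv1n e.symm
    · exact hjn e.symm
  refine ⟨⟨?_, ?_, ?_⟩, ?_, ?_⟩
  · unfold Matrix.IsSymm
    rw [Matrix.transpose_sub, Matrix.transpose_add, hsym, Ema_isSymm v1 j, Ema_isSymm vn j]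
  · intro a
    by_cases haj : a = j
    · subst haj
      rw [hBapp a a, if_neg, if_neg]
      · exact hdiag a
      · rintro (⟨e, _⟩ | ⟨_, e⟩)
        · exact hjn e
        · exact hjn e
      · rintro (⟨e, _⟩ | ⟨_, e⟩)
        · exact hj1 e
        · exact hj1 e
    · rw [hBeq haj haj]; exact hdiag a
  · intro a b
    rw [hBapp a b]
    split_ifs with h1 h2
    · right; right; rfl
    · right; left; rfl
    · exact hval a b
  · -- unbalanced via the triangle v1, vn, w
    have hposnw : 0 < A vn w := by
      rcases hval vn w with h | h | h
      · exfalso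
        rcases hsigns vn w (by rw [h]; norm_num) with ⟨e, _⟩ | ⟨_, e⟩
        · exact hv1n e.symm
        · exact hw1 e
      · exact absurd h hwna
      · rw [h]; norm_num
    have hposw1 : 0 < A w v1 := by
      have hw1a' : A w v1 ≠ 0 := by rw [← hsym.apply w v1]; exact hw1a
      rcases hval w v1 with h | h | h
      · exfalso
        rcases hsigns w v1 (by rw [h]; norm_num) with ⟨e, _⟩ | ⟨e, _⟩
        · exact hw1 e
        · exact hwn e
      · exact absurd h hw1a'
      · rw [h]; norm_num
    refine triangle_unbalanced hv1n (Ne.symm hwn) hw1 ?_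
    rw [hBeq (Ne.symm hj1) (Ne.symm hjn), hBeq (Ne.symm hjn) hwj, hBeq hwj (Ne.symm hj1), hA1n]
    nlinarith [hposnw, hposw1]
  · -- t-K4-free
    refine tk4free_of_subset (fun s hK => ?_) hfree
    have hmem : v1 ∈ s ∧ vn ∈ s := by
      obtain ⟨a, b, ha, hb, hneg'⟩ := neg_entry_of_cycle hK.2.2
      have hneg2 : A a b < 0 := by
        rw [hBapp a b] at hneg'
        split_ifs at hneg' with h h2
        · norm_num at hneg'
        · norm_num at hneg'
        · exact hneg'
      rcases hsigns a b hneg2 with ⟨e1, e2⟩ | ⟨e1, e2⟩ <;> subst e1 <;> subst e2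
      · exact ⟨Finset.mem_coe.mp ha, Finset.mem_coe.mp hb⟩
      · exact ⟨Finset.mem_coe.mp hb, Finset.mem_coe.mp ha⟩
    have hjs : j ∉ s := by
      intro hjs
      have hadj := hK.2.1 vn hmem.2 j hjs (Ne.symm hjn)
      exact hadj hBvnj
    refine k4_transfer (fun a b ha hb => ?_) hK
    exact (hBeq (fun e => hjs (e ▸ ha)) (fun e => hjs (e ▸ hb))).symm

end swapadm2


theorem extremal_neighborhood_domination (t r : ℕ) (ht : 2 ≤ t)
    (hr : (r : ℝ) = (1 + Real.sqrt (8 * (t : ℝ) - 7)) / 2) :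
    ∃ N : ℕ, ∀ n : ℕ, ∀ _hn : N + 4 ≤ n, t ≤ (n - 2).choose 2 →
      ∀ (A : Matrix (Fin n) (Fin n) ℝ) (x : Fin n → ℝ),
        IsSignedGraph A → IsUnbalanced A → TK4Free t A →
        (∀ B : Matrix (Fin n) (Fin n) ℝ,
          IsSignedGraph B → IsUnbalanced B → TK4Free t B → lambdaMax B ≤ lambdaMax A) →
        (∀ i, 0 ≤ x i) → (∑ i, x i ^ 2) = 1 → A.mulVec x = lambdaMax A • x →
        let v1 : Fin n := ⟨0, by omega⟩
        let v2 : Fin n := ⟨1, by omega⟩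
        let vn : Fin n := ⟨n - 1, by omega⟩
        A v1 vn < 0 →
        (∀ i j : Fin n, A i j < 0 → (i = v1 ∧ j = vn) ∨ (i = vn ∧ j = v1)) →
        x vn ≤ x v1 →
        (∀ j : Fin n, A vn j ≠ 0 → j ≠ v1 → A v1 j ≠ 0) ∧
          (∀ j : Fin n, j ≠ v1 → j ≠ vn → (A v1 j ≠ 0 ∨ A vn j ≠ 0)) := by
  refine ⟨0, fun n hn _hch A x hsg hunb hfree hmax hxnn hx1 heig => ?_⟩
  intro v1 v2 vn hneg hsigns hxle
  have hn0 : 0 < n := by omega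
  obtain ⟨hsym, hdiag, hval⟩ := hsg
  have hv1n : v1 ≠ vn := by
    intro h
    have : (0 : ℕ) = n - 1 := congrArg Fin.val h
    omega
  have hA1n : A v1 vn = -1 := by
    rcases hval v1 vn with h | h | h
    · exact h
    · rw [h] at hneg; norm_num at hneg
    · rw [h] at hneg; norm_num at hneg
  have hnn : ∀ a b : Fin n, ¬(a = v1 ∧ b = vn) → ¬(a = vn ∧ b = v1) → 0 ≤ A a b := by
    intro a b h1 h2
    by_contra h
    push_neg at h
    rcases hsigns a b h with h' | h'
    · exact h1 h'
    · exact h2 h'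
  have rowsum : ∀ a, ∑ k, A a k * x k = lambdaMax A * x a := by
    intro a
    have := congrFun heig a
    simpa [Matrix.mulVec, dotProduct] using this
  -- zero spreading
  have zs : ∀ a : Fin n, ((a ≠ v1 ∧ a ≠ vn) ∨ (x v1 = 0 ∧ x vn = 0)) → x a = 0 →
      ∀ b, A a b ≠ 0 → x b = 0 := by
    intro a hcase hxa b hab
    have hterms : ∀ k, 0 ≤ A a k * x k := by
      intro k
      rcases hcase with ⟨h1, h2⟩ | ⟨h1, h2⟩
      · exact mul_nonneg (hnn a k (fun h => h1 h.1) (fun h => h2 h.1)) (hxnn k)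
      · by_cases hk1 : a = v1 ∧ k = vn
        · rw [hk1.2, h2, mul_zero]
        · by_cases hk2 : a = vn ∧ k = v1
          · rw [hk2.2, h1, mul_zero]
          · exact mul_nonneg (hnn a k hk1 hk2) (hxnn k)
    have hsum0 : ∑ k, A a k * x k = 0 := by rw [rowsum a, hxa, mul_zero]
    have hz := (Finset.sum_eq_zero_iff_of_nonneg (fun k _ => hterms k)).mp hsum0 b
      (Finset.mem_univ b)
    rcases mul_eq_zero.mp hz with h | h
    · exact absurd h hab
    · exact h
  have hsg' : IsSignedGraph A := ⟨hsym, hdiag, hval⟩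
  -- the endgame: x cannot vanish at both v1 and vn
  have endgame : x v1 = 0 → x vn = 0 → False := by
    intro h1 hnz
    obtain ⟨u, hu⟩ : ∃ u, x u ≠ 0 := by
      by_contra h
      push_neg at h
      rw [Finset.sum_eq_zero (fun i _ => by rw [h i]; norm_num)] at hx1
      norm_num at hx1
    have hu1 : u ≠ v1 := fun e => hu (by rw [e, h1])
    have hun : u ≠ vn := fun e => hu (by rw [e, hnz])
    have hA1u : A v1 u = 0 := by
      by_contra h
      exact hu (zs v1 (Or.inr ⟨h1, hnz⟩) h1 u h)
    have hAnu : A vn u = 0 := by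
      by_contra h
      exact hu (zs vn (Or.inr ⟨h1, hnz⟩) hnz u h)
    have hAu1 : A u v1 = 0 := by rw [← hsym.apply u v1]; exact hA1u
    have hmaxB := hmax (A + Ema v1 u) (signed_add hsg' (Ne.symm hu1) hA1u)
      (unb_add hunb hA1u hAu1)
      (free_add hsg' hfree hv1n hsigns hu1 hun hA1u (Or.inl hAnu))
    obtain ⟨-, hxu⟩ := add_exchange hn0 hsym hx1 hxnn heig (Ne.symm hu1) hA1u hmaxB
    exact hu hxu
  -- claim 2
  have claim2 : ∀ j : Fin n, j ≠ v1 → j ≠ vn → A v1 j = 0 → A vn j = 0 → False := by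
    intro j hj1 hjn h1j hnj
    have hj1' : A j v1 = 0 := by rw [← hsym.apply j v1]; exact h1j
    have hmaxB := hmax (A + Ema v1 j) (signed_add hsg' (Ne.symm hj1) h1j)
      (unb_add hunb h1j hj1')
      (free_add hsg' hfree hv1n hsigns hj1 hjn h1j (Or.inl hnj))
    obtain ⟨hxv1, -⟩ := add_exchange hn0 hsym hx1 hxnn heig (Ne.symm hj1) h1j hmaxB
    have hxvn : x vn = 0 := le_antisymm (hxv1 ▸ hxle) (hxnn vn)
    exact endgame hxv1 hxvn
  -- claim 1
  have claim1 : ∀ j : Fin n, j ≠ v1 → A vn j ≠ 0 → A v1 j ≠ 0 := by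
    intro j hj1 hnj
    by_contra h1j
    have hjn : j ≠ vn := by
      intro e
      rw [e] at hnj
      exact hnj (hdiag vn)
    by_cases hcom : ∃ w : Fin n, w ≠ v1 ∧ w ≠ vn ∧ A v1 w ≠ 0 ∧ A vn w ≠ 0
    · obtain ⟨w, hw1, hwn, hw1a, hwna⟩ := hcom
      obtain ⟨hBsigned, hBunb, hBfree⟩ := swap_admissible hsg' hunb hfree hv1n hj1 hjn
        hsigns hA1n h1j hnj hw1 hwn hw1a hwna
      have hmaxB := hmax _ hBsigned hBunb hBfree
      obtain ⟨hxj, hxeq⟩ := swap_exchange hn0 hsym hx1 hxnn heig (Ne.symm hj1)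
        (Ne.symm hjn) hv1n h1j hxle hmaxB
      have hjnv : A j vn ≠ 0 := by rw [← hsym.apply j vn]; exact hnj
      have hxvn : x vn = 0 := zs j (Or.inl ⟨hj1, hjn⟩) hxj vn hjnv
      exact endgame (hxeq.trans hxvn) hxvn
    · have hnoc : ∀ w : Fin n, w ≠ v1 → w ≠ vn → ¬(A v1 w ≠ 0 ∧ A vn w ≠ 0) :=
        fun w h1 h2 h3 => hcom ⟨w, h1, h2, h3.1, h3.2⟩
      have hj1' : A j v1 = 0 := by rw [← hsym.apply j v1]; exact h1j
      have hmaxB := hmax (A + Ema v1 j) (signed_add hsg' (Ne.symm hj1) h1j)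
        (unb_add hunb h1j hj1')
        (free_add hsg' hfree hv1n hsigns hj1 hjn h1j (Or.inr hnoc))
      obtain ⟨hxv1, -⟩ := add_exchange hn0 hsym hx1 hxnn heig (Ne.symm hj1) h1j hmaxB
      have hxvn : x vn = 0 := le_antisymm (hxv1 ▸ hxle) (hxnn vn)
      exact endgame hxv1 hxvn
  constructor
  · intro j hAnj hj1
    exact claim1 j hj1 hAnj
  · intro j hj1 hjn
    by_contra h
    push_neg at h
    exact claim2 j hj1 hjn h.1 h.2
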